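/- Let (a_j(i))_{i≥1}, j = 1,2,3, be absolutely summable sequences with sums A_j = Σ_{i≥1} a_j(i) and B_j = Σ_{i≥1} a_j(i)², and define the filter on ℤ₊³ supported on the three coordinate half-axes with c_{(0,0,0)} = −(A₁+A₂+A₃). With ρ(n₁,n₂,n₃) = Σ_{𝐢∈ℤ₊³} c_𝐢 c_{𝐢+(n₁,n₂,n₃)} (terms with any negative index treated as zero), one has V₁ := Σ_{n₁∈ℤ} ρ(n₁,0,0) = (A₂+A₃)² + B₂ + B₃ > 0 (assuming not all a₂, a₃ vanish). -/

import Mathlib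

/-- The three-axis filter on `ℤ₊³`: `c_{(i,0,0)} = a₁(i)`, `c_{(0,i,0)} = a₂(i)`,
`c_{(0,0,i)} = a₃(i)` for `i ≥ 1`, `c_{(0,0,0)} = -(A₁+A₂+A₃)`, and `0` otherwise. -/
noncomputable def axisFilter3 (a₁ a₂ a₃ : ℕ → ℝ) : ℤ × ℤ × ℤ → ℝ := fun p =>
  if p.1 = 0 ∧ p.2.1 = 0 ∧ p.2.2 = 0 then
    -((∑' i : ℕ, a₁ i) + (∑' i : ℕ, a₂ i) + (∑' i : ℕ, a₃ i))
  else if 1 ≤ p.1 ∧ p.2.1 = 0 ∧ p.2.2 = 0 then a₁ p.1.toNat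
  else if p.1 = 0 ∧ 1 ≤ p.2.1 ∧ p.2.2 = 0 then a₂ p.2.1.toNat
  else if p.1 = 0 ∧ p.2.1 = 0 ∧ 1 ≤ p.2.2 then a₃ p.2.2.toNat
  else 0

/-- The covariance function `ρ(n₁,n₂,n₃) = ∑_{𝐢} c_𝐢 c_{𝐢+𝐧}` of the associated linear
random field. -/
noncomputable def rho3 (a₁ a₂ a₃ : ℕ → ℝ) (n : ℤ × ℤ × ℤ) : ℝ :=
  ∑' p : ℤ × ℤ × ℤ,
    axisFilter3 a₁ a₂ a₃ p *
      axisFilter3 a₁ a₂ a₃ (p.1 + n.1, p.2.1 + n.2.1, p.2.2 + n.2.2)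

namespace Axis3Aux

variable (a₁ a₂ a₃ : ℕ → ℝ)

/-- `c₀`, the value of the filter at the origin. -/
noncomputable def c0 : ℝ := -((∑' i : ℕ, a₁ i) + (∑' i : ℕ, a₂ i) + (∑' i : ℕ, a₃ i))

/-- The restriction of the filter to the first axis. -/
noncomputable def dZ : ℤ → ℝ := fun k => axisFilter3 a₁ a₂ a₃ (k, 0, 0)

lemma dZ_def (k : ℤ) :
    dZ a₁ a₂ a₃ k = if k = 0 then c0 a₁ a₂ a₃ else if 1 ≤ k then a₁ k.toNat else 0 := by
  simp only [dZ, axisFilter3, c0]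
  split_ifs <;> first | rfl | (simp only [true_and, and_true] at * <;> omega)

lemma af_axis2 (n i : ℤ) (hi : 1 ≤ i) :
    axisFilter3 a₁ a₂ a₃ (n, i, 0) = if n = 0 then a₂ i.toNat else 0 := by
  simp only [axisFilter3]
  split_ifs <;> first | rfl | (simp only [true_and, and_true] at * <;> omega)

lemma af_axis3 (n i : ℤ) (hi : 1 ≤ i) :
    axisFilter3 a₁ a₂ a₃ (n, 0, i) = if n = 0 then a₃ i.toNat else 0 := by
  simp only [axisFilter3]
  split_ifs <;> first | rfl | (simp only [true_and, and_true] at * <;> omega)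

lemma af_zero (x y z : ℤ) (hA : ¬(y = 0 ∧ z = 0))
    (hB : ¬(x = 0 ∧ 1 ≤ y ∧ z = 0)) (hC : ¬(x = 0 ∧ y = 0 ∧ 1 ≤ z)) :
    axisFilter3 a₁ a₂ a₃ (x, y, z) = 0 := by
  simp only [axisFilter3]
  split_ifs <;> first | rfl | omega | (simp only [true_and, and_true] at * <;> omega)

/-- The shear `(k, m) ↦ (k, k + m)` on `ℤ × ℤ`. -/
def shearEquiv : (ℤ × ℤ) ≃ (ℤ × ℤ) :=
  ⟨fun q => (q.1, q.1 + q.2), fun q => (q.1, q.2 - q.1),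
    fun q => by simp, fun q => by simp⟩

lemma rho_eq (h20 : a₂ 0 = 0) (h30 : a₃ 0 = 0)
    (hs2 : Summable fun i => a₂ i ^ 2) (hs3 : Summable fun i => a₃ i ^ 2) (n : ℤ)
    (hg : Summable fun k => dZ a₁ a₂ a₃ k * dZ a₁ a₂ a₃ (k + n)) :
    rho3 a₁ a₂ a₃ (n, 0, 0) =
      (∑' k : ℤ, dZ a₁ a₂ a₃ k * dZ a₁ a₂ a₃ (k + n)) +
        (if n = 0 then (∑' i : ℕ, a₂ i ^ 2) + (∑' i : ℕ, a₃ i ^ 2) else 0) := by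
  classical
  set c := axisFilter3 a₁ a₂ a₃ with hc
  set f : ℤ × ℤ × ℤ → ℝ := fun p => c p * c (p.1 + n, p.2.1, p.2.2) with hf
  set F₁ : ℤ × ℤ × ℤ → ℝ := fun p => if p.2.1 = 0 ∧ p.2.2 = 0 then f p else 0 with hF1
  set F₂ : ℤ × ℤ × ℤ → ℝ := fun p => if p.1 = 0 ∧ 1 ≤ p.2.1 ∧ p.2.2 = 0 then f p else 0 with hF2
  set F₃ : ℤ × ℤ × ℤ → ℝ := fun p => if p.1 = 0 ∧ p.2.1 = 0 ∧ 1 ≤ p.2.2 then f p else 0 with hF3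
  have hdZ : ∀ k : ℤ, dZ a₁ a₂ a₃ k = c (k, 0, 0) := fun k => rfl
  have hsplit : ∀ p, f p = F₁ p + F₂ p + F₃ p := by
    rintro ⟨x, y, z⟩
    simp only [hF1, hF2, hF3]
    by_cases hA : y = 0 ∧ z = 0
    · rw [if_pos hA, if_neg (by omega), if_neg (by omega)]; ring
    · rw [if_neg hA]
      by_cases hB : x = 0 ∧ 1 ≤ y ∧ z = 0
      · rw [if_pos hB, if_neg (by omega)]; ring
      · rw [if_neg hB]
        by_cases hC : x = 0 ∧ y = 0 ∧ 1 ≤ z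
        · rw [if_pos hC]; ring
        · rw [if_neg hC]
          have : c (x, y, z) = 0 := af_zero a₁ a₂ a₃ x y z hA hB hC
          simp only [hf, this, zero_mul, add_zero]
  have hF₁ : HasSum F₁ (∑' k : ℤ, dZ a₁ a₂ a₃ k * dZ a₁ a₂ a₃ (k + n)) := by
    have hinj : Function.Injective (fun k : ℤ => ((k, 0, 0) : ℤ × ℤ × ℤ)) := by
      intro a b h; simpa using h
    have h0 : ∀ p ∉ Set.range (fun k : ℤ => ((k, 0, 0) : ℤ × ℤ × ℤ)), F₁ p = 0 := by
      rintro ⟨x, y, z⟩ hp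
      simp only [hF1]
      rw [if_neg]
      rintro ⟨hy, hz⟩
      exact hp ⟨x, by simp [hy, hz]⟩
    have hcomp : (F₁ ∘ fun k : ℤ => ((k, 0, 0) : ℤ × ℤ × ℤ)) =
        fun k => dZ a₁ a₂ a₃ k * dZ a₁ a₂ a₃ (k + n) := by
      funext k
      simp only [Function.comp_apply, hF1, hf]
      rw [if_pos (by simp), hdZ k, hdZ (k + n)]
    rw [← hinj.hasSum_iff h0, hcomp]
    exact hg.hasSum
  have hF₂ : HasSum F₂ (if n = 0 then ∑' i : ℕ, a₂ i ^ 2 else 0) := by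
    have hinj : Function.Injective (fun i : ℕ => ((0, (i : ℤ), 0) : ℤ × ℤ × ℤ)) := by
      intro a b h
      simpa using h
    have h0 : ∀ p ∉ Set.range (fun i : ℕ => ((0, (i : ℤ), 0) : ℤ × ℤ × ℤ)), F₂ p = 0 := by
      rintro ⟨x, y, z⟩ hp
      simp only [hF2]
      rw [if_neg]
      rintro ⟨hx, hy, hz⟩
      refine hp ⟨y.toNat, ?_⟩
      simp only [Prod.mk.injEq]
      refine ⟨hx.symm, by omega, hz.symm⟩
    have hcomp : (F₂ ∘ fun i : ℕ => ((0, (i : ℤ), 0) : ℤ × ℤ × ℤ)) =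
        fun i => if n = 0 then a₂ i ^ 2 else 0 := by
      funext i
      simp only [Function.comp_apply, hF2, hf]
      by_cases hi : 1 ≤ (i : ℤ)
      · rw [if_pos (by simp [hi])]
        have e1 : ((0 : ℤ) + n, (i : ℤ), (0 : ℤ)) = ((n, (i : ℤ), 0) : ℤ × ℤ × ℤ) := by
          norm_num
        rw [e1, hc, af_axis2 a₁ a₂ a₃ 0 (i : ℤ) hi, af_axis2 a₁ a₂ a₃ n (i : ℤ) hi]
        by_cases hn : n = 0 <;> simp [hn] <;> ring
      · have hi0 : i = 0 := by omega
        subst hi0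
        rw [if_neg (by simpa using hi)]
        simp [h20]
    rw [← hinj.hasSum_iff h0, hcomp]
    by_cases hn : n = 0
    · simpa [hn] using hs2.hasSum
    · simpa [hn] using (hasSum_zero : HasSum (fun _ : ℕ => (0 : ℝ)) 0)
  have hF₃ : HasSum F₃ (if n = 0 then ∑' i : ℕ, a₃ i ^ 2 else 0) := by
    have hinj : Function.Injective (fun i : ℕ => ((0, 0, (i : ℤ)) : ℤ × ℤ × ℤ)) := by
      intro a b h
      simpa using h
    have h0 : ∀ p ∉ Set.range (fun i : ℕ => ((0, 0, (i : ℤ)) : ℤ × ℤ × ℤ)), F₃ p = 0 := by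
      rintro ⟨x, y, z⟩ hp
      simp only [hF3]
      rw [if_neg]
      rintro ⟨hx, hy, hz⟩
      refine hp ⟨z.toNat, ?_⟩
      simp only [Prod.mk.injEq]
      refine ⟨hx.symm, hy.symm, by omega⟩
    have hcomp : (F₃ ∘ fun i : ℕ => ((0, 0, (i : ℤ)) : ℤ × ℤ × ℤ)) =
        fun i => if n = 0 then a₃ i ^ 2 else 0 := by
      funext i
      simp only [Function.comp_apply, hF3, hf]
      by_cases hi : 1 ≤ (i : ℤ)
      · rw [if_pos (by simp [hi])]
        have e1 : ((0 : ℤ) + n, (0 : ℤ), (i : ℤ)) = ((n, 0, (i : ℤ)) : ℤ × ℤ × ℤ) := by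
          norm_num
        rw [e1, hc, af_axis3 a₁ a₂ a₃ 0 (i : ℤ) hi, af_axis3 a₁ a₂ a₃ n (i : ℤ) hi]
        by_cases hn : n = 0 <;> simp [hn] <;> ring
      · have hi0 : i = 0 := by omega
        subst hi0
        rw [if_neg (by simpa using hi)]
        simp [h30]
    rw [← hinj.hasSum_iff h0, hcomp]
    by_cases hn : n = 0
    · simpa [hn] using hs3.hasSum
    · simpa [hn] using (hasSum_zero : HasSum (fun _ : ℕ => (0 : ℝ)) 0)
  have htot := (hF₁.add hF₂).add hF₃
  have hrho : rho3 a₁ a₂ a₃ (n, 0, 0) = ∑' p, f p := by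
    simp only [rho3]
    refine tsum_congr fun p => ?_
    rw [hf, hc]
    norm_num
  rw [hrho, tsum_congr hsplit, htot.tsum_eq]
  split_ifs <;> ring

end Axis3Aux

set_option maxHeartbeats 2000000 in
open Axis3Aux in
theorem stmt_16 (a₁ a₂ a₃ : ℕ → ℝ)
    (h10 : a₁ 0 = 0) (h20 : a₂ 0 = 0) (h30 : a₃ 0 = 0)
    (h1 : Summable fun i => |a₁ i|) (h2 : Summable fun i => |a₂ i|)
    (h3 : Summable fun i => |a₃ i|)
    (hnz : ∃ i, a₂ i ≠ 0 ∨ a₃ i ≠ 0) :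
    (∑' n : ℤ, rho3 a₁ a₂ a₃ (n, 0, 0)) =
        ((∑' i : ℕ, a₂ i) + (∑' i : ℕ, a₃ i)) ^ 2 +
          (∑' i : ℕ, (a₂ i) ^ 2) + (∑' i : ℕ, (a₃ i) ^ 2) ∧
      0 < ∑' n : ℤ, rho3 a₁ a₂ a₃ (n, 0, 0) := by
  classical
  -- summability of squares
  have hsq : ∀ (a : ℕ → ℝ), Summable (fun i => |a i|) → Summable fun i => a i ^ 2 := by
    intro a ha
    refine Summable.of_nonneg_of_le (fun i => sq_nonneg _) (fun i => ?_)
      (ha.mul_left (∑' j, |a j|))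
    have hb : |a i| ≤ ∑' j, |a j| := Summable.le_tsum ha i fun j _ => abs_nonneg _
    calc a i ^ 2 = |a i| * |a i| := by rw [← abs_mul, ← sq, abs_sq]
      _ ≤ (∑' j, |a j|) * |a i| := mul_le_mul_of_nonneg_right hb (abs_nonneg _)
  have hs2 := hsq a₂ h2
  have hs3 := hsq a₃ h3
  -- one-dimensional filter facts
  have hd_nat : ∀ m : ℕ, dZ a₁ a₂ a₃ (m : ℤ) =
      a₁ m + (if m = 0 then c0 a₁ a₂ a₃ else 0) := by
    intro m
    rw [dZ_def]
    rcases m with _ | k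
    · simp [h10]
    · have hne : ¬((k + 1 : ℕ) : ℤ) = 0 := by exact_mod_cast Nat.succ_ne_zero k
      have hle : (1 : ℤ) ≤ ((k + 1 : ℕ) : ℤ) := by exact_mod_cast Nat.one_le_iff_ne_zero.mpr (Nat.succ_ne_zero k)
      rw [if_neg hne, if_pos hle]
      simp
  have hd_neg : ∀ m : ℕ, dZ a₁ a₂ a₃ (-((m : ℤ) + 1)) = 0 := by
    intro m
    rw [dZ_def, if_neg (by omega), if_neg (by omega)]
  have hzfun : (fun m : ℕ => dZ a₁ a₂ a₃ (-((m : ℤ) + 1))) = fun _ => (0 : ℝ) :=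
    funext fun m => hd_neg m
  have hδ : Summable (fun m : ℕ => if m = 0 then c0 a₁ a₂ a₃ else 0) :=
    (hasSum_ite_eq (0 : ℕ) (c0 a₁ a₂ a₃)).summable
  have hdnat_s : Summable fun m : ℕ => dZ a₁ a₂ a₃ (m : ℤ) := by
    have := (h1.of_abs).add hδ
    simpa [← hd_nat] using this
  have hdneg_s : Summable fun m : ℕ => dZ a₁ a₂ a₃ (-((m : ℤ) + 1)) := by
    rw [hzfun]; exact summable_zero
  have hd : Summable (dZ a₁ a₂ a₃) := Summable.of_nat_of_neg_add_one hdnat_s hdneg_s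
  have habs : Summable fun k => |dZ a₁ a₂ a₃ k| := hd.abs
  -- the total mass of dZ
  have hD : (∑' k : ℤ, dZ a₁ a₂ a₃ k) = -((∑' i : ℕ, a₂ i) + (∑' i : ℕ, a₃ i)) := by
    rw [tsum_of_nat_of_neg_add_one hdnat_s hdneg_s]
    have e2 : (∑' m : ℕ, dZ a₁ a₂ a₃ (-((m : ℤ) + 1))) = 0 := by
      rw [hzfun, tsum_zero]
    have e1 : (∑' m : ℕ, dZ a₁ a₂ a₃ (m : ℤ)) =
        (∑' i : ℕ, a₁ i) + c0 a₁ a₂ a₃ := by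
      rw [tsum_congr hd_nat, Summable.tsum_add (h1.of_abs) hδ, tsum_ite_eq]
    rw [e1, e2, c0]
    ring
  -- product summability
  have hH : Summable (fun q : ℤ × ℤ => dZ a₁ a₂ a₃ q.1 * dZ a₁ a₂ a₃ q.2) := by
    have h := habs.mul_of_nonneg habs (fun _ => abs_nonneg _) (fun _ => abs_nonneg _)
    refine Summable.of_abs ?_
    simpa [abs_mul] using h
  have hFp : Summable (fun q : ℤ × ℤ => dZ a₁ a₂ a₃ q.1 * dZ a₁ a₂ a₃ (q.1 + q.2)) :=
    shearEquiv.summable_iff.mpr hH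
  have hrow : ∀ n : ℤ, Summable fun k => dZ a₁ a₂ a₃ k * dZ a₁ a₂ a₃ (k + n) := by
    intro n
    exact hFp.prod_symm.prod_factor n
  -- the per-n formula
  have key : ∀ n : ℤ, rho3 a₁ a₂ a₃ (n, 0, 0) =
      (∑' k : ℤ, dZ a₁ a₂ a₃ k * dZ a₁ a₂ a₃ (k + n)) +
        (if n = 0 then (∑' i : ℕ, a₂ i ^ 2) + (∑' i : ℕ, a₃ i ^ 2) else 0) :=
    fun n => rho_eq a₁ a₂ a₃ h20 h30 hs2 hs3 n (hrow n)
  -- swap the double sum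
  have hswap : (∑' n : ℤ, ∑' k : ℤ, dZ a₁ a₂ a₃ k * dZ a₁ a₂ a₃ (k + n)) =
      (∑' k : ℤ, dZ a₁ a₂ a₃ k) * (∑' k : ℤ, dZ a₁ a₂ a₃ k) := by
    rw [Summable.tsum_comm (f := fun k n => dZ a₁ a₂ a₃ k * dZ a₁ a₂ a₃ (k + n)) hFp]
    have hinner : ∀ k : ℤ, (∑' n : ℤ, dZ a₁ a₂ a₃ k * dZ a₁ a₂ a₃ (k + n)) =
        dZ a₁ a₂ a₃ k * ∑' m : ℤ, dZ a₁ a₂ a₃ m := by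
      intro k
      rw [tsum_mul_left]
      congr 1
      exact (Equiv.addLeft k).tsum_eq (dZ a₁ a₂ a₃)
    rw [tsum_congr hinner, tsum_mul_right]
  have hgsum : Summable fun n : ℤ => ∑' k : ℤ, dZ a₁ a₂ a₃ k * dZ a₁ a₂ a₃ (k + n) :=
    hFp.prod_symm.prod
  have hhsum : Summable (fun n : ℤ =>
      if n = 0 then (∑' i : ℕ, a₂ i ^ 2) + (∑' i : ℕ, a₃ i ^ 2) else 0) :=
    (hasSum_ite_eq (0 : ℤ) _).summable
  have hmain : (∑' n : ℤ, rho3 a₁ a₂ a₃ (n, 0, 0)) =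
      ((∑' i : ℕ, a₂ i) + (∑' i : ℕ, a₃ i)) ^ 2 +
        (∑' i : ℕ, (a₂ i) ^ 2) + (∑' i : ℕ, (a₃ i) ^ 2) := by
    rw [tsum_congr key, Summable.tsum_add hgsum hhsum, hswap, tsum_ite_eq, hD]
    ring
  refine ⟨hmain, ?_⟩
  rw [hmain]
  have hB2 : (0 : ℝ) ≤ ∑' i : ℕ, a₂ i ^ 2 := tsum_nonneg fun i => sq_nonneg _
  have hB3 : (0 : ℝ) ≤ ∑' i : ℕ, a₃ i ^ 2 := tsum_nonneg fun i => sq_nonneg _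
  have hsqnn : (0 : ℝ) ≤ ((∑' i : ℕ, a₂ i) + (∑' i : ℕ, a₃ i)) ^ 2 := sq_nonneg _
  obtain ⟨i, hi⟩ := hnz
  rcases hi with hi | hi
  · have h1' : a₂ i ^ 2 ≤ ∑' j : ℕ, a₂ j ^ 2 := Summable.le_tsum hs2 i fun j _ => sq_nonneg _
    have h2' : 0 < a₂ i ^ 2 := by
      have := abs_pos.mpr hi
      calc (0 : ℝ) < |a₂ i| ^ 2 := pow_pos this 2
        _ = a₂ i ^ 2 := sq_abs _
    linarith
  · have h1' : a₃ i ^ 2 ≤ ∑' j : ℕ, a₃ j ^ 2 := Summable.le_tsum hs3 i fun j _ => sq_nonneg _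
    have h2' : 0 < a₃ i ^ 2 := by
      have := abs_pos.mpr hi
      calc (0 : ℝ) < |a₃ i| ^ 2 := pow_pos this 2
        _ = a₃ i ^ 2 := sq_abs _
    linarith
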